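/- Suppose ‖A‖ ≤ 1 (operator norm), ‖b‖ = 1, η ≥ 0, and T : ℕ with ‖x₀‖ + 3·η·T ≤ 1. Then for every t ≤ T, the norm of the iterate satisfies ‖x t‖ ≥ ‖x₀‖ − 3·η·t. -/
import Mathlib

theorem gradient_descent_norm_lower_bound (n : ℕ)
    (A : EuclideanSpace ℝ (Fin n) →L[ℝ] EuclideanSpace ℝ (Fin n))
    (b : EuclideanSpace ℝ (Fin n)) (hb : ‖b‖ = 1)
    (f : EuclideanSpace ℝ (Fin n) → ℝ)
    (hf : ∀ x, f x = (1/2) * ‖x‖^2 + (1/2) * ‖A x - b‖^2)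
    (hA : ‖A‖ ≤ 1)
    (η : ℝ) (hη : 0 ≤ η) (x₀ : EuclideanSpace ℝ (Fin n))
    (x : ℕ → EuclideanSpace ℝ (Fin n))
    (hx0 : x 0 = x₀)
    (hx : ∀ t, x (t + 1) = x t - η • (x t + (ContinuousLinearMap.adjoint A) (A (x t) - b)))
    (T : ℕ) (hT : ‖x₀‖ + 3 * η * T ≤ 1)
    (t : ℕ) (ht : t ≤ T) :
    ‖x t‖ ≥ ‖x₀‖ - 3 * η * t := by
  have hAadj : ‖(ContinuousLinearMap.adjoint A : _)‖ = ‖A‖ :=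
    LinearIsometryEquiv.norm_map ContinuousLinearMap.adjoint A
  have key : ∀ s, s ≤ T → ‖x₀‖ - 3*η*s ≤ ‖x s‖ ∧ ‖x s‖ ≤ ‖x₀‖ + 3*η*s := by
    intro s
    induction s with
    | zero => intro _; simp [hx0]
    | succ k ih =>
      intro hk
      have hk' : k ≤ T := Nat.le_of_succ_le hk
      obtain ⟨h1, h2⟩ := ih hk'
      have hcast : (k:ℝ) + 1 ≤ T := by exact_mod_cast Nat.cast_le.2 hk
      have hk1pos : (0:ℝ) ≤ 3*η := by linarith
      have hxk1 : ‖x k‖ ≤ 1 := by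
        have : 3*η*k ≤ 3*η*T := by
          apply mul_le_mul_of_nonneg_left _ hk1pos
          exact_mod_cast Nat.cast_le.2 hk'
        linarith
      set g := x k + (ContinuousLinearMap.adjoint A) (A (x k) - b) with hg
      have hgrad : ‖g‖ ≤ 3 := by
        have h1' : ‖(ContinuousLinearMap.adjoint A) (A (x k) - b)‖ ≤ ‖A (x k) - b‖ := by
          calc ‖(ContinuousLinearMap.adjoint A) (A (x k) - b)‖
              ≤ ‖(ContinuousLinearMap.adjoint A : _)‖ * ‖A (x k) - b‖ :=
                ContinuousLinearMap.le_opNorm _ _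
            _ ≤ 1 * ‖A (x k) - b‖ := by
                apply mul_le_mul_of_nonneg_right _ (norm_nonneg _)
                rw [hAadj]; exact hA
            _ = ‖A (x k) - b‖ := one_mul _
        have h2' : ‖A (x k) - b‖ ≤ ‖A (x k)‖ + ‖b‖ := norm_sub_le _ _
        have h3' : ‖A (x k)‖ ≤ ‖x k‖ := by
          calc ‖A (x k)‖ ≤ ‖A‖ * ‖x k‖ := ContinuousLinearMap.le_opNorm _ _
            _ ≤ 1 * ‖x k‖ := mul_le_mul_of_nonneg_right hA (norm_nonneg _)
            _ = ‖x k‖ := one_mul _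
        calc ‖g‖ ≤ ‖x k‖ + ‖(ContinuousLinearMap.adjoint A) (A (x k) - b)‖ := norm_add_le _ _
          _ ≤ 3 := by rw [hb] at h2'; linarith
      have hstep : x (k+1) = x k - η • g := hx k
      have hηg : ‖η • g‖ ≤ 3 * η := by
        rw [norm_smul, Real.norm_eq_abs, abs_of_nonneg hη]
        nlinarith
      have hupper : ‖x (k+1)‖ ≤ ‖x k‖ + 3*η := by
        rw [hstep]
        calc ‖x k - η • g‖ ≤ ‖x k‖ + ‖η • g‖ := norm_sub_le _ _
          _ ≤ ‖x k‖ + 3*η := by linarith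
      have hlower : ‖x k‖ - 3*η ≤ ‖x (k+1)‖ := by
        rw [hstep]
        have := norm_sub_norm_le (x k) (η • g)
        have h4 : ‖x k‖ - ‖x k - η • g‖ ≤ ‖η • g‖ := by
          have h5 : ‖x k‖ ≤ ‖x k - η • g‖ + ‖η • g‖ := by
            calc ‖x k‖ = ‖(x k - η • g) + η • g‖ := by congr 1; abel
              _ ≤ ‖x k - η • g‖ + ‖η • g‖ := norm_add_le _ _
          linarith
        linarith
      constructor
      · push_cast
        calc ‖x₀‖ - 3*η*((k:ℝ)+1) = (‖x₀‖ - 3*η*k) - 3*η := by ring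
          _ ≤ ‖x k‖ - 3*η := by linarith
          _ ≤ ‖x (k+1)‖ := hlower
      · push_cast
        calc ‖x (k+1)‖ ≤ ‖x k‖ + 3*η := hupper
          _ ≤ ‖x₀‖ + 3*η*k + 3*η := by linarith
          _ = ‖x₀‖ + 3*η*((k:ℝ)+1) := by ring
  exact (key t ht).1
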